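/- Let G be a connected graph of order n ≥ 3 with p ≥ 1 vertices of degree 1. Then d(G) ≥ p. -/

import Mathlib

open Finset in
/-- One stage of the deduction game.  The state is a pair `(P, F)` where `P` is the set of
protected vertices and `F` is the set of vertices whose initial searchers have already fired
(moved).  A vertex `v` is fireable if it is occupied, has not yet fired, and the number of
searchers on it (in the initial layout `L`) is at least its number of unprotected neighbours.
All fireable vertices fire simultaneously: one searcher moves to each unprotected neighbour,
which thereby becomes protected. -/
def dedStep {V : Type*} [Fintype V] [DecidableEq V] (G : SimpleGraph V) [DecidableRel G.Adj]
    (L : V → ℕ) (s : Finset V × Finset V) : Finset V × Finset V :=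
  let fire : Finset V := univ.filter (fun v =>
    0 < L v ∧ v ∉ s.2 ∧ (univ.filter (fun u => G.Adj v u ∧ u ∉ s.1)).card ≤ L v)
  (s.1 ∪ fire.biUnion (fun v => univ.filter (fun u => G.Adj v u ∧ u ∉ s.1)), s.2 ∪ fire)

open Finset in
/-- A layout `L` (assigning a number of searchers to each vertex) is successful if, starting
from the initially occupied vertices being protected and no vertex having fired, iterating the
deduction stages eventually protects every vertex. -/
def DedSuccessful {V : Type*} [Fintype V] [DecidableEq V] (G : SimpleGraph V)
    [DecidableRel G.Adj] (L : V → ℕ) : Prop :=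
  ∃ k : ℕ, ((dedStep G L)^[k] (univ.filter (fun v => 0 < L v), ∅)).1 = univ

/-- The deduction number of `G`: the minimum number of searchers in a successful layout. -/
noncomputable def deductionNumber {V : Type*} [Fintype V] (G : SimpleGraph V) : ℕ :=
  letI := Classical.decEq V
  letI := Classical.decRel G.Adj
  sInf {n | ∃ L : V → ℕ, (∑ v, L v) = n ∧ DedSuccessful G L}

open Finset

section Aux

variable {V : Type*} [Fintype V] [DecidableEq V] (G : SimpleGraph V) [DecidableRel G.Adj]

lemma walk_mem_closed {K : Set V} (hK : ∀ x ∈ K, ∀ y, G.Adj x y → y ∈ K)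
    {a b : V} (p : G.Walk a b) (ha : a ∈ K) : b ∈ K := by
  induction p with
  | nil => exact ha
  | cons h q ih => exact ih (hK _ ha _ h)

lemma no_adj_leaves (hconn : G.Connected) (h3 : 3 ≤ Fintype.card V) {u v : V}
    (hu : G.degree u = 1) (hv : G.degree v = 1) (h : G.Adj u v) : False := by
  have nbu : G.neighborFinset u = {v} := by
    rw [← G.card_neighborFinset_eq_degree] at hu
    obtain ⟨a, ha⟩ := Finset.card_eq_one.mp hu
    have : v ∈ G.neighborFinset u := by simpa using h
    rw [ha] at this ⊢
    simp_all
  have nbv : G.neighborFinset v = {u} := by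
    rw [← G.card_neighborFinset_eq_degree] at hv
    obtain ⟨a, ha⟩ := Finset.card_eq_one.mp hv
    have : u ∈ G.neighborFinset v := by simpa using h.symm
    rw [ha] at this ⊢
    simp_all
  have hK : ∀ x ∈ ({u, v} : Set V), ∀ y, G.Adj x y → y ∈ ({u, v} : Set V) := by
    rintro x (rfl | rfl) y hy
    · have : y ∈ G.neighborFinset x := by simpa using hy
      rw [nbu] at this; simp at this; simp [this]
    · have : y ∈ G.neighborFinset x := by simpa using hy
      rw [nbv] at this; simp at this; simp [this]
  have hall : ∀ w : V, w ∈ ({u, v} : Set V) := fun w => by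
    obtain ⟨p⟩ := hconn.preconnected u w
    exact walk_mem_closed G hK p (by simp)
  have : (univ : Finset V) ⊆ {u, v} := fun w _ => by simpa using hall w
  have := Finset.card_le_card this
  have h2 : ({u, v} : Finset V).card ≤ 2 := card_insert_le _ _ |>.trans (by simp)
  have hcu : (univ : Finset V).card = Fintype.card V := Finset.card_univ
  omega

variable (L : V → ℕ)

/-- The state after `k` steps. -/
noncomputable def dst (k : ℕ) : Finset V × Finset V :=
  (dedStep G L)^[k] (univ.filter (fun v => 0 < L v), ∅)

lemma dst_succ (k : ℕ) : dst G L (k + 1) = dedStep G L (dst G L k) :=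
  Function.iterate_succ_apply' _ _ _

lemma dst_fst_subset (k : ℕ) : (dst G L k).1 ⊆ (dst G L (k + 1)).1 := by
  rw [dst_succ]; exact subset_union_left

lemma dst_snd_subset (k : ℕ) : (dst G L k).2 ⊆ (dst G L (k + 1)).2 := by
  rw [dst_succ]; exact subset_union_left

lemma dst_snd_mono {m n : ℕ} (h : m ≤ n) : (dst G L m).2 ⊆ (dst G L n).2 := by
  induction n with
  | zero => simpa [Nat.le_zero.mp h]
  | succ n ih =>
    rcases Nat.lt_or_ge m (n + 1) with h' | h'
    · exact (ih (by omega)).trans (dst_snd_subset G L n)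
    · have : m = n + 1 := by omega
      subst this; rfl

/-- If `v` becomes protected at step `m`, some neighbour fired at step `m`. -/
lemma cross_fire {v : V} {m : ℕ} (h1 : v ∉ (dst G L m).1) (h2 : v ∈ (dst G L (m + 1)).1) :
    ∃ u, G.Adj u v ∧ u ∉ (dst G L m).2 ∧ u ∈ (dst G L (m + 1)).2 ∧
      (univ.filter (fun w => G.Adj u w ∧ w ∉ (dst G L m).1)).card ≤ L u := by
  rw [dst_succ] at h2
  simp only [dedStep, mem_union, mem_biUnion, mem_filter, mem_univ, true_and] at h2
  rcases h2 with h2 | ⟨u, ⟨hL, hns, hcard⟩, hadj, _⟩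
  · exact absurd h2 h1
  · refine ⟨u, hadj, hns, ?_, hcard⟩
    rw [dst_succ]
    simp only [dedStep, mem_union, mem_filter, mem_univ, true_and]
    exact Or.inr ⟨hL, hns, hcard⟩

/-- Each vertex fires at most once. -/
lemma fire_unique {u : V} {m m' : ℕ}
    (h1 : u ∉ (dst G L m).2) (h2 : u ∈ (dst G L (m + 1)).2)
    (h1' : u ∉ (dst G L m').2) (h2' : u ∈ (dst G L (m' + 1)).2) : m = m' := by
  rcases Nat.lt_trichotomy m m' with h | h | h
  · exact absurd (dst_snd_mono G L (by omega : m + 1 ≤ m') h2) h1'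
  · exact h
  · exact absurd (dst_snd_mono G L (by omega : m' + 1 ≤ m) h2') h1

lemma exists_cross {v : V} {k : ℕ} (h0 : v ∉ (dst G L 0).1) (hk : v ∈ (dst G L k).1) :
    ∃ m, v ∉ (dst G L m).1 ∧ v ∈ (dst G L (m + 1)).1 := by
  induction k with
  | zero => exact absurd hk h0
  | succ k ih =>
    by_cases h : v ∈ (dst G L k).1
    · exact ih h
    · exact ⟨k, h, hk⟩

/-- Main counting lemma. -/
lemma card_leaves_le_sum (hconn : G.Connected) (h3 : 3 ≤ Fintype.card V)
    (hL : DedSuccessful G L) :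
    (univ.filter (fun v => G.degree v = 1)).card ≤ ∑ v, L v := by
  classical
  obtain ⟨k, hk⟩ := hL
  have hk' : ∀ v : V, v ∈ (dst G L k).1 := by
    intro v; rw [show (dst G L k) = (dedStep G L)^[k] (univ.filter (fun v => 0 < L v), ∅) from rfl, hk]; simp
  -- the "assigned searcher position"
  set nb : V → V := fun v => if h : (G.neighborFinset v).Nonempty then h.choose else v with hnb
  have nb_adj : ∀ v, G.degree v = 1 → G.Adj v (nb v) := by
    intro v hv
    have hne : (G.neighborFinset v).Nonempty := by
      rw [← Finset.card_pos, G.card_neighborFinset_eq_degree, hv]; norm_num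
    have := hne.choose_spec
    rw [SimpleGraph.mem_neighborFinset] at this
    simp only [hnb, dif_pos hne]; exact this
  have nb_uniq : ∀ v w, G.degree v = 1 → G.Adj v w → w = nb v := by
    intro v w hv hadj
    have h1 : (G.neighborFinset v).card = 1 := by rw [G.card_neighborFinset_eq_degree, hv]
    obtain ⟨a, ha⟩ := Finset.card_eq_one.mp h1
    have hw : w ∈ G.neighborFinset v := by simpa using hadj
    have hn : nb v ∈ G.neighborFinset v := by simpa using nb_adj v hv
    rw [ha] at hw hn; simp at hw hn; rw [hw, hn]
  set f : V → V := fun v => if 0 < L v then v else nb v with hf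
  set S : Finset V := univ.filter (fun v => G.degree v = 1) with hS
  have key : ∀ u : V, (S.filter (fun v => f v = u)).card ≤ L u := by
    intro u
    by_cases hu : G.degree u = 1
    · -- u is a leaf: fiber ⊆ {u}, and nonempty fiber forces 0 < L u
      have hsub : S.filter (fun v => f v = u) ⊆ {u} := by
        intro v hv
        simp only [hS, mem_filter, mem_univ, true_and] at hv
        obtain ⟨hvleaf, hfv⟩ := hv
        by_cases hLv : 0 < L v
        · simp [hf, hLv] at hfv; simp [hfv]
        · simp [hf, hLv] at hfv
          exact absurd (hfv ▸ nb_adj v hvleaf) (fun hadj => no_adj_leaves G hconn h3 hvleaf hu hadj)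
      rcases (S.filter (fun v => f v = u)).eq_empty_or_nonempty with he | hne
      · simp [he]
      · obtain ⟨v, hv⟩ := hne
        have hvu : v = u := by have := hsub hv; simpa using this
        subst hvu
        simp only [hS, mem_filter, mem_univ, true_and] at hv
        obtain ⟨hvleaf, hfv⟩ := hv
        have hLv : 0 < L v := by
          by_contra hLv
          simp [hf, hLv] at hfv
          exact (nb_adj v hvleaf).ne' hfv
        calc (S.filter (fun w => f w = v)).card ≤ ({v} : Finset V).card :=
              Finset.card_le_card hsub
          _ ≤ L v := by simp only [card_singleton]; omega
    · -- u not a leaf: all fiber members are leaves with L = 0 and unique neighbour u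
      have hmem : ∀ v ∈ S.filter (fun w => f w = u), G.degree v = 1 ∧ L v = 0 ∧ G.Adj v u := by
        intro v hv
        simp only [hS, mem_filter, mem_univ, true_and] at hv
        obtain ⟨hvleaf, hfv⟩ := hv
        by_cases hLv : 0 < L v
        · simp [hf, hLv] at hfv; exact absurd (hfv ▸ hvleaf) hu
        · simp [hf, hLv] at hfv
          exact ⟨hvleaf, by omega, hfv ▸ nb_adj v hvleaf⟩
      -- each such v crosses at some step where u fires
      have hcross : ∀ v ∈ S.filter (fun w => f w = u),
          ∃ m, v ∉ (dst G L m).1 ∧ u ∉ (dst G L m).2 ∧ u ∈ (dst G L (m + 1)).2 ∧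
            (univ.filter (fun w => G.Adj u w ∧ w ∉ (dst G L m).1)).card ≤ L u := by
        intro v hv
        obtain ⟨hvleaf, hLv, hadj⟩ := hmem v hv
        have h0 : v ∉ (dst G L 0).1 := by
          simp [dst, hLv]
        obtain ⟨m, hm1, hm2⟩ := exists_cross G L h0 (hk' v)
        obtain ⟨w, hwadj, hw1, hw2, hwcard⟩ := cross_fire G L hm1 hm2
        have : w = nb v := nb_uniq v w hvleaf hwadj.symm
        have hwu : w = u := by
          simp only [hS, mem_filter, mem_univ, true_and] at hv
          obtain ⟨_, hfv⟩ := hv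
          rw [this]
          by_cases hLv' : 0 < L v
          · omega
          · simpa [hf, hLv'] using hfv
        subst hwu
        exact ⟨m, hm1, hw1, hw2, hwcard⟩
      rcases (S.filter (fun w => f w = u)).eq_empty_or_nonempty with he | hne
      · simp [he]
      · obtain ⟨v0, hv0⟩ := hne
        obtain ⟨m0, hv0m, hu1, hu2, hucard⟩ := hcross v0 hv0
        calc (S.filter (fun w => f w = u)).card
            ≤ (univ.filter (fun w => G.Adj u w ∧ w ∉ (dst G L m0).1)).card := by
              apply Finset.card_le_card
              intro v hv
              obtain ⟨m, hm1, hm2, hm3, _⟩ := hcross v hv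
              have : m = m0 := fire_unique G L hm2 hm3 hu1 hu2
              subst this
              obtain ⟨_, _, hadj⟩ := hmem v hv
              simp only [mem_filter, mem_univ, true_and]
              exact ⟨hadj.symm, hm1⟩
          _ ≤ L u := hucard
  calc S.card = ∑ u : V, (S.filter (fun v => f v = u)).card :=
        Finset.card_eq_sum_card_fiberwise (fun v _ => mem_univ (f v))
    _ ≤ ∑ v, L v := Finset.sum_le_sum (fun u _ => key u)

end Aux

theorem deduction_ge_num_leaves {V : Type*} [Fintype V] [DecidableEq V]
    (G : SimpleGraph V) [DecidableRel G.Adj] (hconn : G.Connected)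
    (h3 : 3 ≤ Fintype.card V) (p : ℕ)
    (hp : (Finset.univ.filter (fun v => G.degree v = 1)).card = p) (hp1 : 1 ≤ p) :
    p ≤ deductionNumber G := by
  classical
  unfold deductionNumber
  have hinst : ∀ L : V → ℕ,
      (@DedSuccessful V _ (Classical.decEq V) G (Classical.decRel G.Adj) L) = DedSuccessful G L := by
    intro L
    congr! <;> exact Subsingleton.elim _ _
  apply le_csInf
  · refine ⟨Fintype.card V, fun _ => 1, by simp, ?_⟩
    rw [hinst]
    exact ⟨0, by simp⟩
  · rintro n ⟨L, hsum, hsucc⟩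
    rw [hinst] at hsucc
    rw [← hp, ← hsum]
    exact card_leaves_le_sum G L hconn h3 hsucc
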